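/- Let U be a finite nonempty set and d : U → [0,1] a function with average d̄ = (Σ_{u∈U} d(u))/|U| satisfying 0 < d̄ ≤ 1. Let k = ⌈log₂(1/d̄)⌉ + 2 and, for r ∈ {1,…,k−1}, let U_r = {u ∈ U : 2^{−r} < d(u) ≤ 2^{−r+1}}. Then there exists r* ∈ {1,…,k−1} such that |U_{r*}|/|U| ≥ 2^{r*}·d̄/(4(k−1)). (Lemma 2.4, level-set pigeonhole for out-degrees.) -/

import Mathlib

/-- **Lemma 2.4** (level-set pigeonhole for out-degrees).
Let `U` be a finite nonempty set and `d : U → [0,1]` with average `d̄ ∈ (0,1]`.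
With `k = ⌈log₂(1/d̄)⌉ + 2` and level sets `U_r = {u : 2^{−r} < d u ≤ 2^{−r+1}}`
for `r ∈ {1,…,k−1}`, there exists `r*` with `|U_{r*}|/|U| ≥ 2^{r*}·d̄/(4(k−1))`. -/
theorem level_set_pigeonhole {α : Type*} [DecidableEq α]
    (U : Finset α) (hU : U.Nonempty)
    (d : α → ℝ) (hd : ∀ u ∈ U, d u ∈ Set.Icc (0 : ℝ) 1)
    (dbar : ℝ) (hdbar : dbar = (∑ u ∈ U, d u) / U.card)
    (hpos : 0 < dbar) (hle : dbar ≤ 1)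
    (k : ℕ) (hk : k = ⌈Real.logb 2 (1 / dbar)⌉₊ + 2) :
    ∃ r ∈ Finset.Icc 1 (k - 1),
      2 ^ r * dbar / (4 * ((k : ℝ) - 1)) ≤
        ((U.filter (fun u => (2 : ℝ)⁻¹ ^ r < d u ∧ d u ≤ (2 : ℝ)⁻¹ ^ (r - 1))).card : ℝ)
          / U.card := by
  classical
  set n : ℝ := (U.card : ℝ) with hn
  have hn0 : 0 < n := by
    rw [hn]; exact_mod_cast Finset.card_pos.mpr hU
  have hk2 : 2 ≤ k := by omega
  have hkR : (1 : ℝ) ≤ (k : ℝ) - 1 := by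
    have : (2 : ℝ) ≤ (k : ℝ) := by exact_mod_cast hk2
    linarith
  -- key bound: 2⁻¹ ^ (k-1) ≤ dbar / 2
  have hpow : (2 : ℝ)⁻¹ ^ (k - 1) ≤ dbar / 2 := by
    set c : ℝ := Real.logb 2 (1 / dbar) with hc
    have h1d : (1 : ℝ) ≤ 1 / dbar := by
      rw [le_div_iff₀ hpos]; linarith
    have hcpos : (0 : ℝ) < 1 / dbar := by positivity
    have h2c : (2 : ℝ) ^ c = 1 / dbar := Real.rpow_logb (by norm_num) (by norm_num) hcpos
    have hle' : (1 : ℝ) / dbar ≤ (2 : ℝ) ^ (⌈c⌉₊ : ℕ) := by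
      have h1 : c ≤ (⌈c⌉₊ : ℝ) := Nat.le_ceil c
      have h2 : (2 : ℝ) ^ c ≤ (2 : ℝ) ^ ((⌈c⌉₊ : ℝ)) :=
        Real.rpow_le_rpow_of_exponent_le (by norm_num) h1
      rw [Real.rpow_natCast] at h2
      linarith [h2c ▸ h2]
    have hkm1 : k - 1 = ⌈c⌉₊ + 1 := by omega
    have h2k : (2 : ℝ) / dbar ≤ (2 : ℝ) ^ (k - 1) := by
      rw [hkm1, pow_succ]
      have : (2 : ℝ) / dbar = (1 / dbar) * 2 := by ring
      rw [this]
      exact mul_le_mul_of_nonneg_right hle' (by norm_num)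
    rw [inv_pow]
    calc ((2 : ℝ) ^ (k - 1))⁻¹ ≤ ((2 : ℝ) / dbar)⁻¹ :=
          inv_anti₀ (by positivity) h2k
      _ = dbar / 2 := by rw [inv_div]
  set Ur : ℕ → Finset α := fun r =>
    U.filter (fun u => (2 : ℝ)⁻¹ ^ r < d u ∧ d u ≤ (2 : ℝ)⁻¹ ^ (r - 1)) with hUrdef
  set T : Finset α := U.filter (fun u => (2 : ℝ)⁻¹ ^ (k - 1) < d u) with hTdef
  -- T is covered by the level sets
  have hTsub : T ⊆ (Finset.Icc 1 (k - 1)).biUnion Ur := by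
    intro u hu
    rw [hTdef, Finset.mem_filter] at hu
    obtain ⟨huU, hud⟩ := hu
    have hd1 : d u ≤ 1 := (hd u huU).2
    have hP : ∃ r, (2 : ℝ)⁻¹ ^ r < d u := ⟨k - 1, hud⟩
    set r := Nat.find hP with hr
    have hrP : (2 : ℝ)⁻¹ ^ r < d u := Nat.find_spec hP
    have hrle : r ≤ k - 1 := Nat.find_min' hP hud
    have hr1 : 1 ≤ r := by
      by_contra h
      have : r = 0 := by omega
      rw [this, pow_zero] at hrP
      linarith
    have hnot : ¬ ((2 : ℝ)⁻¹ ^ (r - 1) < d u) := Nat.find_min hP (by omega)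
    push_neg at hnot
    rw [Finset.mem_biUnion]
    exact ⟨r, Finset.mem_Icc.mpr ⟨hr1, hrle⟩, Finset.mem_filter.mpr ⟨huU, hrP, hnot⟩⟩
  -- the level sets are pairwise disjoint
  have hdisj : ∀ r ∈ Finset.Icc 1 (k - 1), ∀ s ∈ Finset.Icc 1 (k - 1), r ≠ s →
      Disjoint (Ur r) (Ur s) := by
    have key : ∀ r s : ℕ, r < s → Disjoint (Ur r) (Ur s) := by
      intro r s hrs
      rw [Finset.disjoint_left]
      intro u hur hus
      rw [hUrdef, Finset.mem_filter] at hur hus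
      have h1 : d u ≤ (2 : ℝ)⁻¹ ^ (s - 1) := hus.2.2
      have h2 : (2 : ℝ)⁻¹ ^ r < d u := hur.2.1
      have h3 : (2 : ℝ)⁻¹ ^ (s - 1) ≤ (2 : ℝ)⁻¹ ^ r :=
        pow_le_pow_of_le_one (by norm_num) (by norm_num) (by omega)
      linarith
    intro r _ s _ hrs
    rcases Nat.lt_or_ge r s with h | h
    · exact key r s h
    · exact (key s r (by omega)).symm
  -- sum over U equals dbar * n
  have hsum : ∑ u ∈ U, d u = dbar * n := by
    rw [hdbar, div_mul_cancel₀ _ (ne_of_gt hn0)]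
  -- lower bound for the sum over T
  have h1 : dbar * n / 2 ≤ ∑ u ∈ T, d u := by
    have hTU : T ⊆ U := by rw [hTdef]; exact Finset.filter_subset _ U
    have hsplit : ∑ u ∈ U, d u = ∑ u ∈ T, d u + ∑ u ∈ U \ T, d u := by
      rw [← Finset.sum_sdiff hTU]; ring
    have hcompl : ∑ u ∈ U \ T, d u ≤ dbar * n / 2 := by
      calc ∑ u ∈ U \ T, d u ≤ ∑ u ∈ U \ T, (dbar / 2) := by
            apply Finset.sum_le_sum
            intro u hu
            rw [Finset.mem_sdiff, hTdef, Finset.mem_filter] at hu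
            have := hu.2
            push_neg at this
            have h4 := this hu.1
            linarith [hpow]
        _ = ((U \ T).card : ℝ) * (dbar / 2) := by rw [Finset.sum_const]; ring
        _ ≤ n * (dbar / 2) := by
            apply mul_le_mul_of_nonneg_right _ (by positivity)
            have h5 : (U \ T).card ≤ U.card := Finset.card_le_card (Finset.sdiff_subset)
            rw [hn]; exact_mod_cast h5
        _ = dbar * n / 2 := by ring
    linarith [hsplit ▸ hsum]
  -- upper bound for the sum over T
  have h2 : ∑ u ∈ T, d u ≤
      ∑ r ∈ Finset.Icc 1 (k - 1), ((Ur r).card : ℝ) * (2 : ℝ)⁻¹ ^ (r - 1) := by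
    have hstep : ∑ u ∈ T, d u ≤ ∑ u ∈ (Finset.Icc 1 (k - 1)).biUnion Ur, d u := by
      apply Finset.sum_le_sum_of_subset_of_nonneg hTsub
      intro u hu _
      rw [Finset.mem_biUnion] at hu
      obtain ⟨r, _, hur⟩ := hu
      rw [hUrdef, Finset.mem_filter] at hur
      exact (hd u hur.1).1
    rw [Finset.sum_biUnion hdisj] at hstep
    refine hstep.trans (Finset.sum_le_sum ?_)
    intro r _
    calc ∑ u ∈ Ur r, d u ≤ ∑ u ∈ Ur r, (2 : ℝ)⁻¹ ^ (r - 1) := by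
          apply Finset.sum_le_sum
          intro u hu
          rw [hUrdef, Finset.mem_filter] at hu
          exact hu.2.2
      _ = ((Ur r).card : ℝ) * (2 : ℝ)⁻¹ ^ (r - 1) := by rw [Finset.sum_const]; ring
  -- pigeonhole
  by_contra hcon
  push_neg at hcon
  have hbound : ∀ r ∈ Finset.Icc 1 (k - 1),
      ((Ur r).card : ℝ) * (2 : ℝ)⁻¹ ^ (r - 1) < dbar * n / (2 * ((k : ℝ) - 1)) := by
    intro r hr
    have hrc := hcon r hr
    have hr1 : 1 ≤ r := (Finset.mem_Icc.mp hr).1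
    have hcard : ((Ur r).card : ℝ) < 2 ^ r * dbar / (4 * ((k : ℝ) - 1)) * n := by
      rw [div_lt_iff₀ hn0] at hrc
      exact hrc
    have hp : (0 : ℝ) < (2 : ℝ)⁻¹ ^ (r - 1) := by positivity
    have hmul : ((Ur r).card : ℝ) * (2 : ℝ)⁻¹ ^ (r - 1) <
        2 ^ r * dbar / (4 * ((k : ℝ) - 1)) * n * (2 : ℝ)⁻¹ ^ (r - 1) :=
      mul_lt_mul_of_pos_right hcard hp
    have hpowid : (2 : ℝ) ^ r * (2 : ℝ)⁻¹ ^ (r - 1) = 2 := by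
      have : r = (r - 1) + 1 := by omega
      rw [this, pow_succ, inv_pow]
      field_simp
      rw [Nat.add_sub_cancel]
    calc ((Ur r).card : ℝ) * (2 : ℝ)⁻¹ ^ (r - 1) <
          2 ^ r * dbar / (4 * ((k : ℝ) - 1)) * n * (2 : ℝ)⁻¹ ^ (r - 1) := hmul
      _ = (2 ^ r * (2 : ℝ)⁻¹ ^ (r - 1)) * dbar * n / (4 * ((k : ℝ) - 1)) := by ring
      _ = dbar * n / (2 * ((k : ℝ) - 1)) := by
          rw [hpowid]; field_simp; ring
  have hne : (Finset.Icc 1 (k - 1)).Nonempty := by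
    rw [Finset.nonempty_Icc]; omega
  have hsumlt : ∑ r ∈ Finset.Icc 1 (k - 1), ((Ur r).card : ℝ) * (2 : ℝ)⁻¹ ^ (r - 1)
      < ∑ r ∈ Finset.Icc 1 (k - 1), (dbar * n / (2 * ((k : ℝ) - 1))) :=
    Finset.sum_lt_sum_of_nonempty hne hbound
  have hcardIcc : ((Finset.Icc 1 (k - 1)).card : ℝ) = (k : ℝ) - 1 := by
    rw [Nat.card_Icc]
    have : k - 1 + 1 - 1 = k - 1 := by omega
    rw [this]
    have : ((k - 1 : ℕ) : ℝ) = (k : ℝ) - 1 := by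
      have : (1 : ℕ) ≤ k := by omega
      push_cast [Nat.cast_sub this]
      ring
    exact this
  rw [Finset.sum_const, nsmul_eq_mul, hcardIcc] at hsumlt
  have hkpos : (0 : ℝ) < (k : ℝ) - 1 := by linarith
  have : ((k : ℝ) - 1) * (dbar * n / (2 * ((k : ℝ) - 1))) = dbar * n / 2 := by
    field_simp
  rw [this] at hsumlt
  linarith
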